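/- Fix β > 0, x,y ∈ (0,1), and let δ = h_β(x,y). Then β(2δ-x-y) - ln(1-e^{-β(x-δ)}) - ln(1-e^{-β(y-δ)}) + ln(1-e^{-βδ}) + ln(1-e^{-β(1-x-y+δ)}) = 0, i.e., h_β(x,y) is a critical point of the rate function δ ↦ a_β(x,y;δ). -/

import Mathlib

/-- The limiting height profile `h_β(x,y)` of the Mallows measure. -/
noncomputable def hFn (β x y : ℝ) : ℝ :=
  (1 / β) * (Real.log (1 - Real.exp (-β)) -
    Real.log (Real.exp (-β * x) + Real.exp (-β * y) - Real.exp (-β * (x + y)) - Real.exp (-β)))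

private lemma log_mul_div (a b c : ℝ) (ha : 0 < a) (hb : 0 < b) (hc : 0 < c) :
    Real.log (a * b / c) = Real.log a + Real.log b - Real.log c := by
  rw [Real.log_div (by positivity) hc.ne', Real.log_mul ha.ne' hb.ne']

/-- `h_β(x,y)` is a critical point of the rate function: the first derivative of
`a_β(x,y;·)` vanishes at `δ = h_β(x,y)`. -/
theorem hFn_critical_point (β x y : ℝ) (hβ : 0 < β)
    (hx : x ∈ Set.Ioo (0:ℝ) 1) (hy : y ∈ Set.Ioo (0:ℝ) 1) :
    β * (2 * hFn β x y - x - y)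
      - Real.log (1 - Real.exp (-β * (x - hFn β x y)))
      - Real.log (1 - Real.exp (-β * (y - hFn β x y)))
      + Real.log (1 - Real.exp (-β * hFn β x y))
      + Real.log (1 - Real.exp (-β * (1 - x - y + hFn β x y))) = 0 := by
  obtain ⟨hx0, hx1⟩ := hx
  obtain ⟨hy0, hy1⟩ := hy
  set u := Real.exp (-β * x) with hu
  set v := Real.exp (-β * y) with hv
  set q := Real.exp (-β) with hq
  have hq0 : 0 < q := Real.exp_pos _
  have hu0 : 0 < u := Real.exp_pos _
  have hv0 : 0 < v := Real.exp_pos _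
  have hqu : q < u := by
    rw [hq, hu]; exact Real.exp_lt_exp.2 (by nlinarith)
  have hqv : q < v := by
    rw [hq, hv]; exact Real.exp_lt_exp.2 (by nlinarith)
  have hu1 : u < 1 := by
    rw [hu, ← Real.exp_zero]; exact Real.exp_lt_exp.2 (by nlinarith)
  have hv1 : v < 1 := by
    rw [hv, ← Real.exp_zero]; exact Real.exp_lt_exp.2 (by nlinarith)
  set E := u + v - u * v - q with hE
  set A := (1 : ℝ) - q with hA
  have hE0 : 0 < E := by rw [hE]; nlinarith
  have hA0 : 0 < A := by rw [hA]; nlinarith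
  have hsplit : Real.exp (-β * (x + y)) = u * v := by
    rw [hu, hv, ← Real.exp_add]; ring_nf
  have hbd : β * hFn β x y = Real.log A - Real.log E := by
    rw [hFn, hsplit, ← hu, ← hv, ← hq, ← hE, ← hA]
    field_simp
  have hexp : Real.exp (β * hFn β x y) = A / E := by
    rw [hbd, Real.exp_sub, Real.exp_log hA0, Real.exp_log hE0]
  have hexpneg : Real.exp (-(β * hFn β x y)) = E / A := by
    rw [Real.exp_neg, hexp]
    field_simp
  have hlogu : Real.log u = -β * x := Real.log_exp _
  have hlogv : Real.log v = -β * y := Real.log_exp _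
  -- the four log arguments
  have h1 : 1 - Real.exp (-β * (x - hFn β x y)) = (1 - u) * (v - q) / E := by
    have e1 : Real.exp (-β * (x - hFn β x y)) = u * (A / E) := by
      rw [show -β * (x - hFn β x y) = -β * x + β * hFn β x y by ring,
        Real.exp_add, ← hu, hexp]
    rw [e1, hA, hE]
    have hE' : u + v - u * v - q ≠ 0 := hE0.ne'
    have hA' : (1:ℝ) - q ≠ 0 := hA0.ne'
    field_simp
    ring
  have h2 : 1 - Real.exp (-β * (y - hFn β x y)) = (1 - v) * (u - q) / E := by
    have e2 : Real.exp (-β * (y - hFn β x y)) = v * (A / E) := by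
      rw [show -β * (y - hFn β x y) = -β * y + β * hFn β x y by ring,
        Real.exp_add, ← hv, hexp]
    rw [e2, hA, hE]
    have hE' : u + v - u * v - q ≠ 0 := hE0.ne'
    have hE'' : v - v * u - q + u ≠ 0 := by
      rw [show v - v * u - q + u = u + v - u * v - q by ring]; exact hE0.ne'
    have hA' : (1:ℝ) - q ≠ 0 := hA0.ne'
    rw [mul_div_assoc', one_sub_div hE']
    congr 1
    ring
  have h3 : 1 - Real.exp (-β * hFn β x y) = (1 - u) * (1 - v) / A := by
    have e3 : Real.exp (-β * hFn β x y) = E / A := by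
      rw [show -β * hFn β x y = -(β * hFn β x y) by ring, hexpneg]
    rw [e3, hA, hE]
    have hE' : u + v - u * v - q ≠ 0 := hE0.ne'
    have hA' : (1:ℝ) - q ≠ 0 := hA0.ne'
    field_simp
    ring
  have h4 : 1 - Real.exp (-β * (1 - x - y + hFn β x y)) = (u - q) * (v - q) / (u * v * A) := by
    have e4 : Real.exp (-β * (1 - x - y + hFn β x y)) = q / (u * v) * (E / A) := by
      rw [show -β * (1 - x - y + hFn β x y) = -β + -(-β * x) + -(-β * y) + -(β * hFn β x y) by ring,
        Real.exp_add, Real.exp_add, Real.exp_add, Real.exp_neg (-β * x), Real.exp_neg (-β * y),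
        ← hu, ← hv, ← hq, hexpneg]
      field_simp
    rw [e4, hA, hE]
    have huv : u * v * (1 - q) ≠ 0 := by positivity
    have hE' : u + v - u * v - q ≠ 0 := hE0.ne'
    have hA' : (1:ℝ) - q ≠ 0 := hA0.ne'
    field_simp
    ring
  rw [h1, h2, h3, h4,
    log_mul_div _ _ _ (by linarith) (by linarith) hE0,
    log_mul_div _ _ _ (by linarith) (by linarith) hE0,
    log_mul_div _ _ _ (by linarith) (by linarith) hA0,
    log_mul_div _ _ _ (by linarith) (by linarith) (by positivity),
    Real.log_mul (by positivity) hA0.ne', Real.log_mul hu0.ne' hv0.ne']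
  have hb : β * (2 * hFn β x y - x - y)
      = 2 * (Real.log A - Real.log E) + Real.log u + Real.log v := by
    have e : β * (2 * hFn β x y - x - y) = 2 * (β * hFn β x y) + -β * x + -β * y := by ring
    rw [e, hbd, ← hlogu, ← hlogv]
  linarith [hb]
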